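/- Let g and h be Lie triple systems and (ω,θ,ρ) a non-abelian 3-cocycle on g with values in h. Then the trilinear bracket on g⊕h defined by [x+a,y+b,z+c] = [x,y,z]_g + ω(x,y,z) + D_θ(x,y)c + θ(y,z)a − θ(x,z)b + D_ρ(z)(a,b) + ρ(x)(b,c) − ρ(y)(a,c) + [a,b,c]_h makes g⊕h a Lie triple system. -/
import Mathlib


universe u v w

/-- A Lie triple system over a field `k`. -/
structure LTS (k : Type u) (V : Type v) [Field k] [AddCommGroup V] [Module k V] where
  t : V →ₗ[k] V →ₗ[k] V →ₗ[k] V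
  alt : ∀ x y, t x x y = 0
  cyc : ∀ x y z, t x y z + t y z x + t z x y = 0
  leib : ∀ a b x y z, t a b (t x y z) =
    t (t a b x) y z + t x (t a b y) z + t x y (t a b z)

/-- `D_θ(x,y) a = θ(y,x) a - θ(x,y) a`. -/
def Dmap {G H : Type*} [AddCommGroup H] (θ : G → G → H → H) (x y : G) (a : H) : H :=
  θ y x a - θ x y a

/-- `D_ρ(x)(a,b) = ρ(x)(b,a) - ρ(x)(a,b)`. -/
def Drho {G H : Type*} [AddCommGroup H] (ρ : G → H → H → H) (x : G) (a b : H) : H :=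
  ρ x b a - ρ x a b

/-- A non-abelian 3-cocycle on `g` with values in `h`: identities (3.2)–(3.14) of the paper,
together with the wedge conditions on `ω`, `θ`, `ρ`. -/
def IsNACocycle {G H : Type*} [AddCommGroup H]
    (tg : G → G → G → G) (th : H → H → H → H)
    (ω : G → G → G → H) (θ : G → G → H → H) (ρ : G → H → H → H) : Prop :=
  (∀ x y, ω x x y = 0) ∧
  (∀ x a, θ x x a = 0) ∧
  (∀ x a, ρ x a a = 0) ∧
  (∀ x y z, ω x y z + ω y z x + ω z x y = 0) ∧
  (∀ x1 x2 y1 y2 y3,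
    Dmap θ x1 x2 (ω y1 y2 y3) + ω x1 x2 (tg y1 y2 y3) =
      ω (tg x1 x2 y1) y2 y3 + θ y2 y3 (ω x1 x2 y1)
      + ω y1 (tg x1 x2 y2) y3 - θ y1 y3 (ω x1 x2 y2)
      + ω y1 y2 (tg x1 x2 y3) + Dmap θ y1 y2 (ω x1 x2 y3)) ∧
  (∀ x y z w a,
    Dmap θ x y (θ z w a) - θ z w (Dmap θ x y a) =
      θ (tg x y z) w a + θ z (tg x y w) a
      - Drho ρ w (ω x y z) a - ρ z a (ω x y w)) ∧
  (∀ x y z w a,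
    θ x (tg y z w) a - ρ x a (ω y z w) =
      θ z w (θ x y a) - θ y w (θ x z a) + Dmap θ y z (θ x w a)) ∧
  (∀ x y z a b,
    Dmap θ x y (ρ z a b) =
      ρ z (Dmap θ x y a) b + ρ (tg x y z) a b + th (ω x y z) a b
      + ρ z a (Dmap θ x y b)) ∧
  (∀ x y z a b,
    Dmap θ y z (ρ x a b) =
      ρ x a (Dmap θ y z b) - ρ z (θ x y a) b + ρ y (θ x z a) b) ∧
  (∀ x y z a b,
    θ y z (ρ x a b) =
      ρ x a (θ y z b) - Drho ρ z (θ x y a) b - ρ y b (θ x z a)) ∧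
  (∀ x y a b c,
    Dmap θ x y (th a b c) =
      th (Dmap θ x y a) b c + th a (Dmap θ x y b) c + th a b (Dmap θ x y c)) ∧
  (∀ x y a b c,
    ρ x a (ρ y b c) =
      ρ y (ρ x a b) c + ρ y b (ρ x a c) - th (θ x y a) b c) ∧
  (∀ x y a b c,
    th a b (θ x y c) =
      θ x y (th a b c) - Drho ρ y (Drho ρ x a b) c - ρ x c (Drho ρ y a b)) ∧
  (∀ x a b c d,
    th a b (ρ x c d) =
      ρ x (th a b c) d - th c (Drho ρ x a b) d + ρ x c (th a b d)) ∧
  (∀ x a b c d,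
    ρ x a (th b c d) =
      th (ρ x a b) c d + th b (ρ x a c) d + th b c (ρ x a d))

/-- The bracket `[x+a, y+b, z+c]_{(ω,θ,ρ)}` on `g ⊕ h`. -/
def nabBr {G H : Type*} [AddCommGroup H]
    (tg : G → G → G → G) (th : H → H → H → H)
    (ω : G → G → G → H) (θ : G → G → H → H) (ρ : G → H → H → H) :
    G × H → G × H → G × H → G × H :=
  fun p q r =>
    (tg p.1 q.1 r.1,
      ω p.1 q.1 r.1 + Dmap θ p.1 q.1 r.2 + θ q.1 r.1 p.2 - θ p.1 r.1 q.2
        + Drho ρ r.1 p.2 q.2 + ρ p.1 q.2 r.2 - ρ q.1 p.2 r.2 + th p.2 q.2 r.2)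

/-- Equivalence of two non-abelian 3-cocycles via `φ : g → h`
(equations (3.15)–(3.17) of the paper). -/
def CocycleEquiv {G H : Type*} [AddCommGroup H]
    (tg : G → G → G → G) (th : H → H → H → H)
    (ω1 : G → G → G → H) (θ1 : G → G → H → H) (ρ1 : G → H → H → H)
    (ω2 : G → G → G → H) (θ2 : G → G → H → H) (ρ2 : G → H → H → H)
    (φ : G → H) : Prop :=
  (∀ x y z,
    ω1 x y z - ω2 x y z =
      θ2 x z (φ y) - Dmap θ2 x y (φ z) + ρ2 x (φ y) (φ z) - θ2 y z (φ x)
        + Drho ρ2 z (φ x) (φ y) - ρ2 y (φ x) (φ z)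
        - th (φ x) (φ y) (φ z) + φ (tg x y z)) ∧
  (∀ x y a,
    θ1 x y a - θ2 x y a =
      ρ2 x a (φ y) - Drho ρ2 y a (φ x) + th a (φ x) (φ y)) ∧
  (∀ x a b, ρ1 x a b - ρ2 x a b = th a (φ x) b)

/-- The operation `i_f(g)` on degree-one cochains (from equations (4.2)–(4.4)). -/
def ibrack {M : Type*} [AddCommGroup M] (f g : M → M → M → M) :
    M → M → M → M → M → M :=
  fun x1 y1 x2 y2 z =>
    f (g x1 y1 x2) y2 z + f x2 (g x1 y1 y2) z
      - (f x1 y1 (g x2 y2 z) - f x2 y2 (g x1 y1 z))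

/-- The graded bracket `[f,g]_{Lts} = (-1)^{1·1} i_f(g) - i_g(f)` of two degree-one cochains. -/
def brLts {M : Type*} [AddCommGroup M] (f g : M → M → M → M) :
    M → M → M → M → M → M :=
  fun x1 y1 x2 y2 z =>
    -(ibrack f g x1 y1 x2 y2 z) - ibrack g f x1 y1 x2 y2 z

/-- Non-abelian 1-cocycles on `g` with values in `h`. -/
def IsZ1 {G H : Type*} [AddCommGroup H]
    (tg : G → G → G → G) (th : H → H → H → H)
    (θ : G → G → H → H) (ρ : G → H → H → H) (φ : G → H) : Prop :=
  (∀ x a b, th a (φ x) b = 0) ∧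
  (∀ x y a, th a (φ x) (φ y) - Drho ρ y a (φ x) + ρ x a (φ y) = 0) ∧
  (∀ x y z,
    Drho ρ z (φ x) (φ y) - ρ y (φ x) (φ z) - θ y z (φ x)
      + ρ x (φ y) (φ z) + θ x z (φ y) - Dmap θ x y (φ z)
      = th (φ x) (φ y) (φ z) - φ (tg x y z))

set_option maxHeartbeats 1000000000 in
/-- if `(ω,θ,ρ)` is a non-abelian 3-cocycle on `g` with values in `h`, then the
bracket `[x+a,y+b,z+c]_{(ω,θ,ρ)}` makes `g ⊕ h` into a Lie triple system. -/
theorem statement3 {k G H : Type*} [Field k] [AddCommGroup G] [Module k G]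
    [AddCommGroup H] [Module k H]
    (Lg : LTS k G) (Lh : LTS k H)
    (ω : G →ₗ[k] G →ₗ[k] G →ₗ[k] H)
    (θ : G →ₗ[k] G →ₗ[k] H →ₗ[k] H)
    (ρ : G →ₗ[k] H →ₗ[k] H →ₗ[k] H)
    (hcoc : IsNACocycle (fun x y z => Lg.t x y z) (fun a b c => Lh.t a b c)
      (fun x y z => ω x y z) (fun x y a => θ x y a) (fun x a b => ρ x a b)) :
    ∀ B : G × H → G × H → G × H → G × H,
      B = nabBr (fun x y z => Lg.t x y z) (fun a b c => Lh.t a b c)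
        (fun x y z => ω x y z) (fun x y a => θ x y a) (fun x a b => ρ x a b) →
      (∀ p q, B p p q = 0) ∧
      (∀ p q r, B p q r + B q r p + B r p q = 0) ∧
      (∀ p q u v w, B p q (B u v w) =
        B (B p q u) v w + B u (B p q v) w + B u v (B p q w)) := by
  obtain ⟨hω0, hθ0, hρ0, hωcyc, h33, h34, h35, h36, h37, h38, h39, h310, h311, h312, h313⟩ := hcoc
  simp only [Dmap, Drho, map_add, map_sub, LinearMap.add_apply, LinearMap.sub_apply] at h33 h34 h35 h36 h37 h38 h39 h310 h311 h312 h313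
  have hanti : ∀ a b c : H, Lh.t a b c + Lh.t b a c = 0 := by
    intro a b c
    have h := Lh.alt (a + b) c
    simp only [map_add, LinearMap.add_apply, Lh.alt a c, Lh.alt b c] at h
    linear_combination (norm := abel) h
  rintro B rfl
  refine ⟨?_, ?_, ?_⟩
  · rintro ⟨x1, a1⟩ ⟨x2, a2⟩
    simp only [nabBr, Dmap, Drho, Prod.mk_eq_zero]
    constructor
    · exact Lg.alt x1 x2
    · simp only [hω0, hθ0, Lh.alt]
      abel
  · rintro ⟨x1, a1⟩ ⟨x2, a2⟩ ⟨x3, a3⟩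
    simp only [nabBr, Dmap, Drho, Prod.mk_add_mk, Prod.mk_eq_zero]
    constructor
    · exact Lg.cyc x1 x2 x3
    · linear_combination (norm := abel) hωcyc x1 x2 x3 + Lh.cyc a1 a2 a3
  · rintro ⟨x1, a1⟩ ⟨x2, a2⟩ ⟨y1, b1⟩ ⟨y2, b2⟩ ⟨y3, b3⟩
    simp only [nabBr, Dmap, Drho, Prod.mk_add_mk, Prod.mk.injEq]
    constructor
    · exact Lg.leib x1 x2 y1 y2 y3
    · simp only [map_add, map_sub, LinearMap.add_apply, LinearMap.sub_apply]
      linear_combination (norm := abel) h33 x1 x2 y1 y2 y3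
      + h35 x2 y1 y2 y3 a1
      - (h36 y1 y2 y3 a2 a1)
      + h36 y1 y2 y3 a1 a2
      + Lh.cyc (ω y1 y2 y3) a1 a2
      - (h38 y1 y2 y3 a2 a1)
      + h38 y1 y2 y3 a1 a2
      + h38 y2 y1 y3 a2 a1
      - (h38 y2 y1 y3 a1 a2)
      - (hanti (ω y1 y2 y3) a2 a1)
      + h311 y2 y3 a1 a2 b1
      + h312 y3 a1 a2 b2 b1
      - (h312 y3 a1 a2 b1 b2)
      + hanti b1 (ρ y3 a2 a1) b2
      - (hanti b1 (ρ y3 a1 a2) b2)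
      - (Lh.cyc b1 b2 (ρ y3 a2 a1))
      + Lh.cyc b1 b2 (ρ y3 a1 a2)
      + Lh.leib a1 a2 b1 b2 b3
      - (h312 y2 a1 a2 b1 b3)
      - (h311 y1 y3 a1 a2 b2)
      + hanti b2 (ρ y1 a1 a2) b3
      + hanti b3 (ρ y1 a2 a1) b2
      - (Lh.cyc b3 b2 (ρ y1 a2 a1))
      + hanti b3 b2 (ρ y1 a2 a1)
      - (Lh.cyc b3 (ρ y1 a2 a1) b2)
      + h312 y1 a1 a2 b2 b3
      - (h311 y1 y2 a1 a2 b3)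
      + h311 y2 y1 a1 a2 b3
      + h38 x2 y2 y3 a1 b1
      + h310 y3 x2 a1 b1 b2
      - (hanti b1 b2 (θ x2 y3 a1))
      + Lh.cyc b1 (θ x2 y3 a1) b2
      - (Lh.cyc b2 (θ y3 x2 a1) b1)
      + hanti b2 (θ y3 x2 a1) b1
      - (h310 x2 y3 a1 b2 b1)
      - (Lh.cyc b2 b1 (θ y3 x2 a1))
      + hanti b2 b1 (θ y3 x2 a1)
      - (h311 y3 x2 b1 a1 b2)
      - (h39 x2 y3 b1 a1 b2)
      - (h310 y3 x2 b1 a1 b2)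
      + h310 x2 y3 b1 a1 b2
      + h311 x2 y3 b1 a1 b2
      - (h313 x2 a1 b1 b2 b3)
      - (hanti b1 (θ y2 x2 a1) b3)
      - (h311 y2 x2 b1 a1 b3)
      - (h39 x2 y2 b1 a1 b3)
      - (h310 y2 x2 b1 a1 b3)
      + h310 x2 y2 b1 a1 b3
      + h310 y2 x2 a1 b1 b3
      + h311 x2 y2 b1 a1 b3
      - (h38 x2 y1 y3 a1 b2)
      - (h310 x2 y1 a1 b2 b3)
      + h37 x2 y1 y2 a1 b3
      - (h35 x1 y1 y2 y3 a2)
      - (h38 x1 y2 y3 a2 b1)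
      + Lh.cyc (θ x1 y3 a2) b1 b2
      + h310 x1 y3 a2 b2 b1
      - (h310 x1 y3 a2 b1 b2)
      - (hanti (θ x1 y3 a2) b2 b1)
      + h313 x1 a2 b1 b2 b3
      + hanti b1 (θ y2 x1 a2) b3
      + h311 y2 x1 b1 a2 b3
      + h39 x1 y2 b1 a2 b3
      + h310 y2 x1 b1 a2 b3
      - (h310 x1 y2 b1 a2 b3)
      - (h310 y2 x1 a2 b1 b3)
      - (h311 x1 y2 b1 a2 b3)
      + h38 x1 y1 y3 a2 b2
      + h310 x1 y1 a2 b2 b3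
      - (h37 x1 y1 y2 a2 b3)
      + h34 x1 x2 y2 y3 b1
      + h36 x1 x2 y3 b2 b1
      - (h36 x1 x2 y3 b1 b2)
      - (Lh.cyc (ω x1 x2 y3) b1 b2)
      + hanti (ω x1 x2 y3) b2 b1
      + h39 x1 x2 b1 b2 b3
      - (h36 x1 x2 y2 b1 b3)
      - (hanti b1 (ω x1 x2 y2) b3)
      - (h34 x1 x2 y1 y3 b2)
      + h36 x1 x2 y1 b2 b3
      + h34 x1 x2 y2 y1 b3
      - (h34 x1 x2 y1 y2 b3)
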